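/- Let G be a K_{2,r}-free undirected graph (r ≥ 2) with χ(G) ≥ (rs)^s. Then for every optimal proper coloring of G, every tree on s vertices is present as an induced rainbow subgraph of G. -/

import Mathlib

open Finset

namespace Stmt12Aux

/-- Descendant relation via iterating a parent map. -/
def Desc {ι : Type*} (par : ι → ι) (j k : ι) : Prop := ∃ n : ℕ, par^[n] k = j

section Desc

variable {ι : Type*} {par : ι → ι} {j k l j₀ : ι} {dp : ι → ℕ}

theorem desc_refl : Desc par j j := ⟨0, rfl⟩

theorem desc_all (hroot : par j₀ = j₀) (hpar : ∀ i, i ≠ j₀ → dp (par i) < dp i)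
    (j : ι) : Desc par j₀ j := by
  suffices H : ∀ (n : ℕ) (j : ι), dp j = n → Desc par j₀ j from H (dp j) j rfl
  intro n
  induction n using Nat.strong_induction_on with
  | _ n ih =>
    intro j hn
    by_cases h : j = j₀
    · exact ⟨0, h⟩
    · obtain ⟨m, hm⟩ := ih (dp (par j)) (hn ▸ hpar j h) (par j) rfl
      exact ⟨m + 1, by rwa [Function.iterate_succ_apply]⟩

end Desc

variable {V : Type*} [Fintype V]

/-- `u` can serve as image of the node `j` for a downward rainbow embedding of the
subtree rooted at `j`, with prescribed colors `σ`. -/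
def IsGood {ι : Type*} (G : SimpleGraph V) (c : V → ℕ) (σ : ι → ℕ) (par : ι → ι)
    (j : ι) (u : V) : Prop :=
  ∃ φ : ι → V, φ j = u ∧ (∀ k, Desc par j k → c (φ k) = σ k) ∧
    (∀ k, Desc par j k → k ≠ j → G.Adj (φ (par k)) (φ k))

section Glue

variable {ι : Type*} {G : SimpleGraph V} {c : V → ℕ} {σ : ι → ℕ} {par : ι → ι}
  {j : ι} {u : V}

theorem good_of_children (hcu : c u = σ j)
    (hch : ∀ y, par y = j → y ≠ j → ∃ v, G.Adj u v ∧ IsGood G c σ par y v) :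
    IsGood G c σ par j u := by
  classical
  have H : ∀ y : ι, ∃ ψ : ι → V, par y = j → y ≠ j →
      G.Adj u (ψ y) ∧ (∀ k, Desc par y k → c (ψ k) = σ k) ∧
      (∀ k, Desc par y k → k ≠ y → G.Adj (ψ (par k)) (ψ k)) := by
    intro y
    by_cases hy : par y = j ∧ y ≠ j
    · obtain ⟨v, hadj, φ, hφv, hcol, hadj2⟩ := hch y hy.1 hy.2
      exact ⟨φ, fun _ _ => ⟨by rw [hφv]; exact hadj, hcol, hadj2⟩⟩
    · exact ⟨fun _ => u, fun h1 h2 => absurd ⟨h1, h2⟩ hy⟩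
  choose Ψ hΨ using H
  -- facts about Nat.find on Desc
  have hne0 : ∀ (k) (hk : Desc par j k), k ≠ j → Nat.find hk ≠ 0 := by
    intro k hk hkj h0
    have := Nat.find_spec hk
    rw [h0] at this
    exact hkj this
  have hfind : ∀ (k) (hk : Desc par j k), Nat.find hk - 1 + 1 = Nat.find hk → True := fun _ _ _ => trivial
  have hfc_par : ∀ (k) (hk : Desc par j k), k ≠ j →
      par (par^[Nat.find hk - 1] k) = j := by
    intro k hk hkj
    have h1 := Nat.find_spec hk
    have h2 : Nat.find hk - 1 + 1 = Nat.find hk := by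
      have := hne0 k hk hkj; omega
    rw [← Function.iterate_succ_apply' par (Nat.find hk - 1) k]
    rw [show (Nat.find hk - 1).succ = Nat.find hk - 1 + 1 from rfl, h2]
    exact h1
  have hfc_ne : ∀ (k) (hk : Desc par j k), k ≠ j → par^[Nat.find hk - 1] k ≠ j := by
    intro k hk hkj h
    exact (Nat.find_min hk (m := Nat.find hk - 1)
      (by have := hne0 k hk hkj; omega)) h
  have hfc_desc : ∀ (k) (hk : Desc par j k), Desc par (par^[Nat.find hk - 1] k) k :=
    fun k hk => ⟨Nat.find hk - 1, rfl⟩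
  have hdesc_par : ∀ (k) (hk : Desc par j k), k ≠ j → Desc par j (par k) := by
    intro k hk hkj
    refine ⟨Nat.find hk - 1, ?_⟩
    rw [← Function.iterate_succ_apply par (Nat.find hk - 1) k,
      show (Nat.find hk - 1).succ = Nat.find hk - 1 + 1 from rfl,
      (by have := hne0 k hk hkj; omega : Nat.find hk - 1 + 1 = Nat.find hk)]
    exact Nat.find_spec hk
  have hfind_par : ∀ (k) (hk : Desc par j k) (hk' : Desc par j (par k)), k ≠ j → par k ≠ j →
      Nat.find hk' = Nat.find hk - 1 := by
    intro k hk hk' hkj hpkj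
    have h1 := Nat.find_spec hk
    have h2 := Nat.find_spec hk'
    have hn0 := hne0 k hk hkj
    have hle : Nat.find hk' ≤ Nat.find hk - 1 := by
      apply Nat.find_min'
      rw [← Function.iterate_succ_apply par,
        show (Nat.find hk - 1).succ = Nat.find hk - 1 + 1 from rfl,
        (by omega : Nat.find hk - 1 + 1 = Nat.find hk)]
      exact h1
    have hge : ¬ (Nat.find hk' < Nat.find hk - 1) := by
      intro hlt
      have : par^[Nat.find hk' + 1] k = j := by
        rw [Function.iterate_succ_apply par]
        exact h2
      exact (Nat.find_min hk (by omega)) this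
    omega
  have hfc_parent_eq : ∀ (k) (hk : Desc par j k) (hk' : Desc par j (par k)),
      k ≠ j → par k ≠ j →
      par^[Nat.find hk' - 1] (par k) = par^[Nat.find hk - 1] k := by
    intro k hk hk' hkj hpkj
    rw [hfind_par k hk hk' hkj hpkj]
    rw [← Function.iterate_succ_apply par (Nat.find hk - 1 - 1) k,
      show (Nat.find hk - 1 - 1).succ = Nat.find hk - 1 - 1 + 1 from rfl]
    congr 1
    have hn0 := hne0 k hk hkj
    have hn1 : Nat.find hk ≠ 1 := by
      intro h1
      apply hpkj
      have := Nat.find_spec hk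
      rw [h1] at this
      simpa using this
    omega
  -- the glued map
  set φ : ι → V := fun k => if h : Desc par j k ∧ k ≠ j
    then Ψ (par^[Nat.find h.1 - 1] k) k else u with hφdef
  refine ⟨φ, ?_, ?_, ?_⟩
  · simp only [φ]
    rw [dif_neg]
    simp
  · intro k hk
    by_cases hkj : k = j
    · subst hkj
      simp only [φ]
      rw [dif_neg (by simp)]
      exact hcu
    · simp only [φ]
      rw [dif_pos ⟨hk, hkj⟩]
      exact (hΨ _ (hfc_par k hk hkj) (hfc_ne k hk hkj)).2.1 k (hfc_desc k hk)
  · intro k hk hkj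
    by_cases hpkj : par k = j
    · -- k is a child of j; then par^[find - 1] k = k
      have hfind1 : Nat.find hk = 1 := by
        have hle : Nat.find hk ≤ 1 := Nat.find_min' hk (by simpa using hpkj)
        have := hne0 k hk hkj
        omega
      have hfck : par^[Nat.find hk - 1] k = k := by rw [hfind1]; rfl
      have hφk : φ k = Ψ k k := by
        simp only [φ]
        rw [dif_pos ⟨hk, hkj⟩, hfck]
      have hφj : φ (par k) = u := by
        simp only [φ]
        rw [dif_neg (by simp [hpkj])]
      rw [hφk, hφj ]
      exact (hΨ k hpkj hkj).1
    · have hk' : Desc par j (par k) := hdesc_par k hk hkj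
      have hφpk : φ (par k) = Ψ (par^[Nat.find hk - 1] k) (par k) := by
        simp only [φ]
        rw [dif_pos ⟨hk', hpkj⟩]
        congr 1
        exact hfc_parent_eq k hk hk' hkj hpkj
      have hφk : φ k = Ψ (par^[Nat.find hk - 1] k) k := by
        simp only [φ]
        rw [dif_pos ⟨hk, hkj⟩]
      rw [hφpk, hφk]
      refine (hΨ _ (hfc_par k hk hkj) (hfc_ne k hk hkj)).2.2 k (hfc_desc k hk) ?_
      intro hke
      apply hpkj
      rw [hke]
      exact hfc_par k hk hkj

theorem notGood_child (hcu : c u = σ j) (hng : ¬ IsGood G c σ par j u) :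
    ∃ y, par y = j ∧ y ≠ j ∧ ∀ v, G.Adj u v → ¬ IsGood G c σ par y v := by
  by_contra h
  push_neg at h
  refine hng (good_of_children hcu ?_)
  intro y h1 h2
  obtain ⟨v, hv1, hv2⟩ := h y h1 h2
  exact ⟨v, hv1, hv2⟩

end Glue

section Opt

variable {G : SimpleGraph V}

theorem opt_le (c : V → ℕ)
    (hopt : ((univ.image c).card : ℕ∞) = G.chromaticNumber)
    (c' : V → ℕ) (hc' : ∀ u v, G.Adj u v → c' u ≠ c' v) :
    (univ.image c).card ≤ (univ.image c').card := by
  classical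
  have C : G.Coloring (univ.image c' : Finset ℕ) :=
    SimpleGraph.Coloring.mk (fun v => ⟨c' v, mem_image_of_mem c' (mem_univ v)⟩)
      (fun {u v} h => by simpa [Subtype.ext_iff] using hc' u v h)
  have h2 := C.colorable.chromaticNumber_le
  rw [← hopt, Fintype.card_coe] at h2
  exact_mod_cast h2

/-- Key theorem: an optimally colored graph contains every rooted forest pattern
with any prescribed injective coloring by used colors, as a rainbow subgraph. -/
theorem exists_pattern {ι : Type*} (par : ι → ι) (dp : ι → ℕ) (j₀ : ι)
    (hroot : par j₀ = j₀) (hpar : ∀ i, i ≠ j₀ → dp (par i) < dp i)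
    (c : V → ℕ) (hc : ∀ u v, G.Adj u v → c u ≠ c v)
    (hopt : ((univ.image c).card : ℕ∞) = G.chromaticNumber)
    (σ : ι → ℕ) (hσ : Function.Injective σ) (hσm : ∀ j, σ j ∈ univ.image c) :
    ∃ g : ι → V, (∀ j, c (g j) = σ j) ∧ (∀ j, j ≠ j₀ → G.Adj (g (par j)) (g j)) := by
  classical
  by_cases hgood : ∃ u, IsGood G c σ par j₀ u
  · obtain ⟨u, φ, hφu, hcol, hadj⟩ := hgood
    exact ⟨φ, fun j => hcol j (desc_all hroot hpar j),
      fun j hj => hadj j (desc_all hroot hpar j) hj⟩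
  · exfalso
    push_neg at hgood
    have sel : ∀ u : V, ∃ y, (∃ j, σ j = c u ∧ ¬ IsGood G c σ par j u) →
        (σ (par y) = c u ∧ y ≠ j₀ ∧ ∀ v, G.Adj u v → ¬ IsGood G c σ par y v) := by
      intro u
      by_cases hP : ∃ j, σ j = c u ∧ ¬ IsGood G c σ par j u
      · obtain ⟨j, hj1, hj2⟩ := hP
        obtain ⟨y, h1, h2, h3⟩ := notGood_child hj1.symm hj2
        refine ⟨y, fun _ => ⟨by rw [h1]; exact hj1, ?_, h3⟩⟩
        intro he
        apply h2
        subst he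
        rw [← h1, hroot]
      · exact ⟨j₀, fun h => absurd h hP⟩
    choose selY hsel using sel
    set P : V → Prop := fun u => ∃ j, σ j = c u ∧ ¬ IsGood G c σ par j u with hPdef
    set c' : V → ℕ := fun u => if P u then σ (selY u) else c u with hc'def
    have hval_pos : ∀ u, P u → c' u = σ (selY u) := by
      intro u hu; simp only [c', if_pos hu]
    have hval_neg : ∀ u, ¬ P u → c' u = c u := by
      intro u hu; simp only [c', if_neg hu]
    have hproper : ∀ u v, G.Adj u v → c' u ≠ c' v := by
      intro u v huv
      have hnotgood : ∀ w z, ¬ P w → σ z = c w → IsGood G c σ par z w := by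
        intro w z hw hz
        by_contra hng
        exact hw ⟨z, hz, hng⟩
      by_cases hu : P u <;> by_cases hv : P v
      · rw [hval_pos u hu, hval_pos v hv]
        intro he
        have : selY u = selY v := hσ he
        have h1 := (hsel u hu).1
        have h2 := (hsel v hv).1
        rw [this] at h1
        exact hc u v huv (h1 ▸ h2 ▸ rfl)
      · rw [hval_pos u hu, hval_neg v hv]
        intro he
        exact (hsel u hu).2.2 v huv (hnotgood v (selY u) hv he)
      · rw [hval_neg u hu, hval_pos v hv]
        intro he
        exact (hsel v hv).2.2 u (G.adj_symm huv) (hnotgood u (selY v) hu he.symm)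
      · rw [hval_neg u hu, hval_neg v hv]
        exact hc u v huv
    have hmiss : ∀ u, c' u ≠ σ j₀ := by
      intro u
      by_cases hu : P u
      · rw [hval_pos u hu]
        intro he
        exact (hsel u hu).2.1 (hσ he)
      · rw [hval_neg u hu]
        intro he
        exact hu ⟨j₀, he.symm, hgood u⟩
    have hsub : univ.image c' ⊆ (univ.image c).erase (σ j₀) := by
      intro b hb
      obtain ⟨u, _, rfl⟩ := mem_image.mp hb
      refine mem_erase.mpr ⟨hmiss u, ?_⟩
      by_cases hu : P u
      · rw [hval_pos u hu]
        exact hσm (selY u)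
      · rw [hval_neg u hu]
        exact mem_image_of_mem c (mem_univ u)
    have h1 := opt_le c hopt c' hproper
    have h2 : (univ.image c').card ≤ (univ.image c).card - 1 := by
      calc (univ.image c').card ≤ ((univ.image c).erase (σ j₀)).card := card_le_card hsub
        _ = (univ.image c).card - 1 := card_erase_of_mem (hσm j₀)
    have h3 : 0 < (univ.image c).card := card_pos.mpr ⟨σ j₀, hσm j₀⟩
    omega

end Opt

section Tree

open SimpleGraph

theorem tree_structure {W : Type*} [Fintype W] {T : SimpleGraph W} (hT : T.IsTree)
    (root : W) :
    ∃ (par : W → W) (dep : W → ℕ),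
      par root = root ∧ dep root = 0 ∧
      (∀ y, y ≠ root → T.Adj (par y) y ∧ dep (par y) + 1 = dep y) ∧
      (∀ a b, T.Adj a b → a = par b ∨ b = par a) ∧
      (∀ y, dep y + 1 ≤ Fintype.card W) := by
  classical
  have EU := hT.existsUnique_path
  let pth : ∀ y, T.Walk y root := fun y => (EU y root).choose
  have hpath : ∀ y, (pth y).IsPath := fun y => (EU y root).choose_spec.1
  have huniq : ∀ (y) (q : T.Walk y root), q.IsPath → q = pth y :=
    fun y q hq => (EU y root).choose_spec.2 q hq
  have hnil : pth root = Walk.nil := (huniq root Walk.nil Walk.IsPath.nil).symm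
  refine ⟨fun y => (pth y).getVert 1, fun y => (pth y).length, ?_, ?_, ?_, ?_, ?_⟩
  · show (pth root).getVert 1 = root
    rw [hnil]; rfl
  · show (pth root).length = 0
    rw [hnil]; rfl
  · intro y hy
    obtain ⟨w, hadj, q, hq⟩ := Walk.exists_eq_cons_of_ne hy (pth y)
    have hq2 : q = pth w := huniq w q (by
      have := hpath y
      rw [hq] at this
      exact this.of_cons)
    constructor
    · show T.Adj ((pth y).getVert 1) y
      have : (pth y).getVert 1 = w := by
        rw [hq, Walk.getVert_cons_succ, Walk.getVert_zero]
      rw [this]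
      exact hadj.symm
    · show (pth ((pth y).getVert 1)).length + 1 = (pth y).length
      have h1 : (pth y).getVert 1 = w := by
        rw [hq, Walk.getVert_cons_succ, Walk.getVert_zero]
      rw [h1, ← hq2, hq]
      simp [Walk.length_cons]
  · intro a b hab
    by_cases hb : b ∈ (pth a).support
    · right
      have hane : a ≠ root := by
        intro h
        subst h
        rw [hnil, Walk.support_nil] at hb
        simp only [List.mem_singleton] at hb
        exact hab.ne' hb
      -- takeUntil is a path from a to b, hence equals the single-edge path
      have htu : ((pth a).takeUntil b hb).IsPath := (hpath a).takeUntil hb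
      have hep : (Walk.cons hab Walk.nil : T.Walk a b).IsPath := by
        rw [Walk.cons_isPath_iff]
        exact ⟨Walk.IsPath.nil, by simp [hab.ne]⟩
      have hequ : (pth a).takeUntil b hb = Walk.cons hab Walk.nil :=
        (EU a b).unique htu hep
      have hspec := (pth a).take_spec hb
      rw [hequ] at hspec
      show b = (pth a).getVert 1
      rw [← hspec, Walk.cons_append, Walk.nil_append, Walk.getVert_cons_succ,
        Walk.getVert_zero]
    · left
      have hbp : (Walk.cons hab.symm (pth a)).IsPath := by
        rw [Walk.cons_isPath_iff]
        exact ⟨hpath a, hb⟩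
      have : Walk.cons hab.symm (pth a) = pth b := huniq b _ hbp
      show a = (pth b).getVert 1
      rw [← this, Walk.getVert_cons_succ, Walk.getVert_zero]
  · intro y
    exact (hpath y).length_lt

end Tree

section Blowup

/-- Nodes of the blow-up tree: a tree vertex together with a branch-choice word,
normalized to be zero above the depth of the vertex. -/
def JT (s m : ℕ) (dep : Fin s → ℕ) : Type :=
  {p : Fin s × (Fin s → Fin m) // ∀ i : Fin s, dep p.1 ≤ (i : ℕ) → (p.2 i : ℕ) = 0}

instance JT.fintype (s m : ℕ) (dep : Fin s → ℕ) : Fintype (JT s m dep) := by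
  unfold JT; infer_instance

variable {s m : ℕ} {dep : Fin s → ℕ}

def parJT (par : Fin s → Fin s) (hm : 0 < m) (j : JT s m dep) : JT s m dep :=
  ⟨(par j.1.1, fun i => if (i : ℕ) < dep (par j.1.1) then j.1.2 i else ⟨0, hm⟩),
    fun i hi => by simp only [if_neg (not_lt.mpr hi)]⟩

def rootJT (root : Fin s) (hm : 0 < m) (hdr : dep root = 0) : JT s m dep :=
  ⟨(root, fun _ => ⟨0, hm⟩), fun _ _ => rfl⟩

theorem JT.fst_eq_root {root : Fin s} {hm : 0 < m} {hdr : dep root = 0}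
    {j : JT s m dep} (h : j.1.1 = root) : j = rootJT root hm hdr := by
  obtain ⟨⟨x, fn⟩, hp⟩ := j
  simp only at h
  subst h
  unfold rootJT
  refine Subtype.ext (Prod.ext rfl ?_)
  funext i
  exact Fin.ext (hp i (by rw [hdr]; exact Nat.zero_le _))

theorem parJT_root {root : Fin s} (hm : 0 < m) (hdr : dep root = 0)
    (par : Fin s → Fin s) (hpr : par root = root) :
    parJT par hm (rootJT root hm hdr) = rootJT root hm hdr := by
  apply JT.fst_eq_root
  exact hpr

theorem JT.card_le (hs : 1 ≤ s) (hdep : ∀ y, dep y + 1 ≤ s) :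
    Fintype.card (JT s m dep) ≤ s * m ^ (s - 1) := by
  classical
  have hemb : Function.Injective
      (fun j : JT s m dep => (j.1.1, fun i : Fin (s-1) => j.1.2 (Fin.castLE (Nat.sub_le s 1) i))) := by
    intro a b h
    rw [Prod.mk.injEq] at h
    refine Subtype.ext (Prod.ext h.1 ?_)
    funext k
    by_cases hk : (k : ℕ) < s - 1
    · have := congrFun h.2 ⟨k.1, hk⟩
      simpa [Fin.castLE, Fin.eta] using this
    · have hk1 : dep a.1.1 ≤ (k : ℕ) := by
        have := hdep a.1.1; omega
      have hk2 : dep b.1.1 ≤ (k : ℕ) := by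
        have := hdep b.1.1; omega
      exact Fin.ext ((a.2 k hk1).trans (b.2 k hk2).symm)
  calc Fintype.card (JT s m dep)
      ≤ Fintype.card (Fin s × (Fin (s-1) → Fin m)) := Fintype.card_le_of_injective _ hemb
    _ = s * m ^ (s - 1) := by
        simp [Fintype.card_fun]

end Blowup

end Stmt12Aux

/-- `G` contains no subgraph isomorphic to the complete bipartite graph `K_{2,r}`. -/
def K2rFree {V : Type*} (G : SimpleGraph V) (r : ℕ) : Prop :=
  ¬ ∃ (u x : V) (w : Fin r → V), Function.Injective w ∧ u ≠ x ∧
      (∀ i, w i ≠ u ∧ w i ≠ x) ∧ ∀ i, G.Adj u (w i) ∧ G.Adj x (w i)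

open Finset Stmt12Aux

/-- If `G` is a `K_{2,r}`-free graph (`r ≥ 2`) with `χ(G) ≥ (rs)^s`, then for every
optimal proper coloring of `G`, every tree on `s` vertices is present in `G` as an
induced rainbow subgraph. -/
theorem stmt12 {V : Type*} [Fintype V] (G : SimpleGraph V) (r s : ℕ) (hr : 2 ≤ r)
    (hfree : K2rFree G r)
    (hchi : (((r * s) ^ s : ℕ) : ℕ∞) ≤ G.chromaticNumber)
    (c : V → ℕ) (hc : ∀ u v, G.Adj u v → c u ≠ c v)
    (hopt : ((Finset.univ.image c).card : ℕ∞) = G.chromaticNumber)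
    (T : SimpleGraph (Fin s)) (hT : T.IsTree) :
    ∃ f : Fin s → V, Function.Injective f ∧
      (∀ a b, T.Adj a b ↔ G.Adj (f a) (f b)) ∧ Function.Injective (c ∘ f) := by
  classical
  rcases Nat.eq_zero_or_pos s with hs0 | hs
  · subst hs0
    obtain ⟨x⟩ := hT.isConnected.nonempty
    exact x.elim0
  set t := (univ.image c).card with ht
  have htchi : (r * s) ^ s ≤ t := by
    rw [← Nat.cast_le (α := ℕ∞)]
    rw [hopt]
    exact hchi
  set m := r * s with hmdef
  have hm : 0 < m := Nat.mul_pos (by omega) hs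
  -- rooted tree structure
  obtain ⟨par, dep, hparroot, hdeproot, hpar, hadjcl, hdepbound⟩ :=
    tree_structure hT ⟨0, hs⟩
  set root : Fin s := ⟨0, hs⟩ with hrootdef
  have hdepbound' : ∀ y, dep y + 1 ≤ s := by
    intro y
    have := hdepbound y
    rwa [Fintype.card_fin] at this
  -- the blow-up index type
  set j₀ : JT s m dep := rootJT root hm hdeproot with hj₀def
  have hrootJ : parJT par hm j₀ = j₀ := parJT_root hm hdeproot par hparroot
  have hfst_ne : ∀ j : JT s m dep, j ≠ j₀ → j.1.1 ≠ root := by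
    intro j hj h
    exact hj (JT.fst_eq_root h)
  have hparJ : ∀ j : JT s m dep, j ≠ j₀ → dep ((parJT par hm j).1.1) < dep j.1.1 := by
    intro j hj
    have h1 := (hpar j.1.1 (hfst_ne j hj)).2
    show dep (par j.1.1) < dep j.1.1
    omega
  -- the injection into colors
  have hcardJ : Fintype.card (JT s m dep) ≤ Fintype.card (univ.image c : Finset ℕ) := by
    rw [Fintype.card_coe]
    calc Fintype.card (JT s m dep) ≤ s * m ^ (s - 1) := JT.card_le hs hdepbound'
      _ ≤ m * m ^ (s - 1) := Nat.mul_le_mul_right _ (Nat.le_mul_of_pos_left s (by omega))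
      _ = m ^ s := by
          rw [← pow_succ']
          congr 1
          omega
      _ ≤ t := htchi
  obtain ⟨e⟩ := Function.Embedding.nonempty_of_card_le hcardJ
  set σ : JT s m dep → ℕ := fun j => (e j : ℕ) with hσdef
  have hσinj : Function.Injective σ := fun a b h => e.injective (Subtype.ext h)
  have hσm : ∀ j, σ j ∈ univ.image c := fun j => (e j).2
  obtain ⟨g, hgcol, hgadj⟩ := exists_pattern (parJT par hm) (fun j => dep j.1.1) j₀
    hrootJ hparJ c hc hopt σ hσinj hσm
  have hginj : Function.Injective g := fun a b h => hσinj (by rw [← hgcol a, ← hgcol b, h])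
  -- greedy pruning
  have grow : ∀ n : ℕ, n + 1 ≤ s → ∃ (S : Finset (Fin s)) (node : Fin s → JT s m dep),
      S.card = n + 1 ∧ root ∈ S ∧
      (∀ y ∈ S, (node y).1.1 = y) ∧
      node root = j₀ ∧
      (∀ y ∈ S, y ≠ root → par y ∈ S ∧ parJT par hm (node y) = node (par y)) ∧
      (∀ y ∈ S, ∀ z ∈ S, y ≠ z → y ≠ par z → z ≠ par y →
        ¬ G.Adj (g (node y)) (g (node z))) := by
    intro n
    induction n with
    | zero =>
      intro _
      refine ⟨{root}, fun _ => j₀, by simp, by simp, ?_, rfl, ?_, ?_⟩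
      · intro y hy
        rw [mem_singleton] at hy
        subst hy
        rfl
      · intro y hy hyr
        rw [mem_singleton] at hy
        exact absurd hy hyr
      · intro y hy z hz hyz _ _
        rw [mem_singleton] at hy hz
        exact absurd (hy.trans hz.symm) hyz
    | succ n IH =>
      intro hns
      obtain ⟨S, node, hScard, hSroot, hnfst, hnroot, hnpar, hnadj⟩ := IH (by omega)
      have hSc : (univ \ S).Nonempty := by
        rw [sdiff_nonempty]
        intro hsub
        have := card_le_card hsub
        rw [card_univ, Fintype.card_fin, hScard] at this
        omega
      obtain ⟨y, hySc, hymin⟩ := exists_min_image (univ \ S) dep hSc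
      have hyS : y ∉ S := (mem_sdiff.mp hySc).2
      have hyroot : y ≠ root := fun h => hyS (h ▸ hSroot)
      have hxS : par y ∈ S := by
        by_contra hx
        have hmem' : par y ∈ univ \ S := mem_sdiff.mpr ⟨mem_univ _, hx⟩
        have h1 := hymin (par y) hmem'
        have h2 := (hpar y hyroot).2
        omega
      set x := par y with hxdef
      have hnx : (node x).1.1 = x := hnfst x hxS
      have hdxy : dep x + 1 = dep y := (hpar y hyroot).2
      have hdxs : dep x < s := by have := hdepbound' y; omega
      set pos : Fin s := ⟨dep x, hdxs⟩ with hposdef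
      have hposval : (pos : ℕ) = dep x := rfl
      set cnd : Fin m → JT s m dep := fun i =>
        ⟨(y, Function.update (node x).1.2 pos i), by
          intro k hk
          have hk' : dep y ≤ (k : ℕ) := hk
          have hkpos : k ≠ pos := by
            intro h
            rw [h, hposval] at hk'
            omega
          show (Function.update (node x).1.2 pos i k : ℕ) = 0
          rw [Function.update_of_ne hkpos]
          refine (node x).2 k ?_
          rw [hnx]
          omega⟩ with hcnddef
      have hcndfst : ∀ i, (cnd i).1.1 = y := fun i => rfl
      have hcndpar : ∀ i, parJT par hm (cnd i) = node x := by
        intro i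
        refine Subtype.ext (Prod.ext ?_ ?_)
        · show par y = (node x).1.1
          rw [hnx]
        · funext k
          show (if (k : ℕ) < dep (par y) then Function.update (node x).1.2 pos i k else ⟨0, hm⟩)
            = (node x).1.2 k
          rw [← hxdef]
          by_cases hk : (k : ℕ) < dep x
          · rw [if_pos hk, Function.update_of_ne (by
              intro h
              rw [h, hposval] at hk
              omega)]
          · rw [if_neg hk]
            refine Fin.ext ?_
            show (0 : ℕ) = ((node x).1.2 k : ℕ)
            exact ((node x).2 k (by rw [hnx]; omega)).symm
      have hcndne : ∀ i, cnd i ≠ j₀ := by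
        intro i h
        exact hyroot (by rw [← hcndfst i, h]; rfl)
      have hcndadj : ∀ i, G.Adj (g (node x)) (g (cnd i)) := by
        intro i
        have := hgadj (cnd i) (hcndne i)
        rwa [hcndpar i] at this
      have hcndinj : Function.Injective cnd := by
        intro i1 i2 h
        have := congrFun (congrArg (fun j : JT s m dep => j.1.2) h) pos
        simpa [cnd, Function.update_self] using this
      set B : Fin s → Finset (Fin m) := fun z =>
        univ.filter (fun i => G.Adj (g (cnd i)) (g (node z))) with hBdef
      have hBcard : ∀ z ∈ S.erase x, (B z).card ≤ r - 1 := by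
        intro z hz
        by_contra hBz
        push_neg at hBz
        have hrB : r ≤ (B z).card := by omega
        obtain ⟨W, hWsub, hWcard⟩ := exists_subset_card_eq hrB
        have hxz : x ≠ z := fun h => (mem_erase.mp hz).1 h.symm
        apply hfree
        refine ⟨g (node x), g (node z),
          fun q => g (cnd (W.orderIsoOfFin hWcard q)), ?_, ?_, ?_, ?_⟩
        · intro q1 q2 h
          have h1 : ((W.orderIsoOfFin hWcard q1) : Fin m)
              = ((W.orderIsoOfFin hWcard q2) : Fin m) := hcndinj (hginj h)
          exact (W.orderIsoOfFin hWcard).injective (Subtype.ext h1)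
        · intro h
          apply hxz
          have heq := hginj h
          have h2 : (node x).1.1 = (node z).1.1 := by rw [heq]
          rw [hnx, hnfst z (mem_of_mem_erase hz)] at h2
          exact h2
        · intro q
          have hqB : ((W.orderIsoOfFin hWcard q) : Fin m) ∈ B z :=
            hWsub (W.orderIsoOfFin hWcard q).2
          rw [hBdef] at hqB
          rw [mem_filter] at hqB
          exact ⟨(hcndadj _).ne', hqB.2.ne⟩
        · intro q
          have hqB : ((W.orderIsoOfFin hWcard q) : Fin m) ∈ B z :=
            hWsub (W.orderIsoOfFin hWcard q).2
          rw [hBdef] at hqB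
          rw [mem_filter] at hqB
          exact ⟨hcndadj _, hqB.2.symm⟩
      have hallbad : ((S.erase x).biUnion B).card < m := by
        calc ((S.erase x).biUnion B).card ≤ (S.erase x).card * (r - 1) :=
              card_biUnion_le_card_mul _ _ _ hBcard
          _ = n * (r - 1) := by rw [card_erase_of_mem hxS, hScard, Nat.add_sub_cancel]
          _ ≤ (s - 2) * (r - 1) := Nat.mul_le_mul_right _ (by omega)
          _ ≤ s * (r - 1) := Nat.mul_le_mul_right _ (by omega)
          _ < s * r := by
              apply mul_lt_mul_of_pos_left (by omega : r - 1 < r) hs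
          _ = m := by rw [hmdef, Nat.mul_comm]
      obtain ⟨i, hibad⟩ : ∃ i : Fin m, i ∉ (S.erase x).biUnion B := by
        by_contra hco
        push_neg at hco
        have hsub2 : (univ : Finset (Fin m)) ⊆ (S.erase x).biUnion B := fun i _ => hco i
        have := card_le_card hsub2
        rw [card_univ, Fintype.card_fin] at this
        omega
      refine ⟨insert y S, Function.update node y (cnd i), ?_, ?_, ?_, ?_, ?_, ?_⟩
      · rw [card_insert_of_notMem hyS, hScard]
      · exact mem_insert_of_mem hSroot
      · intro w hw
        rcases mem_insert.mp hw with h | h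
        · rw [h, Function.update_self]
        · rw [Function.update_of_ne (by rintro rfl; exact hyS h)]
          exact hnfst w h
      · rw [Function.update_of_ne (Ne.symm hyroot)]
        exact hnroot
      · intro w hw hwroot
        rcases mem_insert.mp hw with h | h
        · constructor
          · rw [h]
            exact mem_insert_of_mem hxS
          · rw [h, Function.update_self,
              Function.update_of_ne (fun hh => hyS (by rw [← hh]; exact hxS))]
            exact hcndpar i
        · have hwy : w ≠ y := by rintro rfl; exact hyS h
          have h1 := hnpar w h hwroot
          constructor
          · exact mem_insert_of_mem h1.1
          · rw [Function.update_of_ne hwy,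
              Function.update_of_ne (by rintro rfl; exact hyS h1.1)]
            exact h1.2
      · intro w hw z hz hwz hwpz hzpw
        rcases mem_insert.mp hw with hw' | hw' <;> rcases mem_insert.mp hz with hz' | hz'
        · exact absurd (hw'.trans hz'.symm) hwz
        · have hzy : z ≠ y := fun hh => hyS (hh ▸ hz')
          have hzx : z ≠ x := fun hh =>
            hzpw (hh.trans (hxdef.trans (congrArg par hw'.symm)))
          have hzS : z ∈ S.erase x := mem_erase.mpr ⟨hzx, hz'⟩
          rw [hw', Function.update_self, Function.update_of_ne hzy]
          intro hadj
          apply hibad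
          refine mem_biUnion.mpr ⟨z, hzS, ?_⟩
          rw [hBdef]
          exact mem_filter.mpr ⟨mem_univ i, hadj⟩
        · have hwy : w ≠ y := fun hh => hyS (hh ▸ hw')
          have hwx : w ≠ x := fun hh =>
            hwpz (hh.trans (hxdef.trans (congrArg par hz'.symm)))
          have hwS : w ∈ S.erase x := mem_erase.mpr ⟨hwx, hw'⟩
          rw [hz', Function.update_self, Function.update_of_ne hwy]
          intro hadj
          apply hibad
          refine mem_biUnion.mpr ⟨w, hwS, ?_⟩
          rw [hBdef]
          exact mem_filter.mpr ⟨mem_univ i, hadj.symm⟩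
        · rw [Function.update_of_ne (by rintro rfl; exact hyS hw'),
            Function.update_of_ne (by rintro rfl; exact hyS hz')]
          exact hnadj w hw' z hz' hwz hwpz hzpw
  obtain ⟨S, node, hScard, hSroot, hnfst, hnroot, hnpar, hnadj⟩ :=
    grow (s - 1) (by omega)
  have hSuniv : S = univ := Finset.eq_univ_of_card S (by rw [hScard, Fintype.card_fin]; omega)
  have hmem : ∀ y : Fin s, y ∈ S := fun y => hSuniv ▸ mem_univ y
  have hnodeinj : Function.Injective node := by
    intro a b h
    have h1 := hnfst a (hmem a)
    have h2 := hnfst b (hmem b)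
    rw [← h1, ← h2, h]
  refine ⟨fun a => g (node a), ?_, ?_, ?_⟩
  · exact fun a b h => hnodeinj (hginj h)
  · intro a b
    constructor
    · intro hab
      rcases hadjcl a b hab with h | h
      · -- a = par b
        have hbroot : b ≠ root := by
          intro hb
          subst hb
          rw [hparroot] at h
          subst h
          exact hab.ne rfl
        have hnb : node b ≠ j₀ := by
          intro hh
          apply hbroot
          rw [← hnfst b (hmem b), hh]
          rfl
        have := hgadj (node b) hnb
        rw [(hnpar b (hmem b) hbroot).2, ← h] at this
        exact this
      · -- b = par a
        have haroot : a ≠ root := by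
          intro ha
          subst ha
          rw [hparroot] at h
          subst h
          exact hab.ne rfl
        have hna : node a ≠ j₀ := by
          intro hh
          apply haroot
          rw [← hnfst a (hmem a), hh]
          rfl
        have := hgadj (node a) hna
        rw [(hnpar a (hmem a) haroot).2, ← h] at this
        exact this.symm
    · intro hadj
      by_contra hnadjT
      have hab : a ≠ b := by
        intro h
        subst h
        exact G.irrefl hadj
      have h1 : a ≠ par b := by
        intro h
        have hbroot : b ≠ root := by
          intro hb
          subst hb
          rw [hparroot] at h
          exact hab h
        exact hnadjT (h ▸ (hpar b hbroot).1)
      have h2 : b ≠ par a := by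
        intro h
        have haroot : a ≠ root := by
          intro ha
          subst ha
          rw [hparroot] at h
          exact hab h.symm
        exact hnadjT (h ▸ (hpar a haroot).1).symm
      exact hnadj a (hmem a) b (hmem b) hab h1 h2 hadj
  · intro a b h
    simp only [Function.comp] at h
    rw [hgcol, hgcol] at h
    exact hnodeinj (hσinj h)
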